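/- For every y ∈ 𝒴 and every pair a, b ∈ ℓ̄₁(Λ), the function φ(t) = h_ε(a + t(b − a), y) is three times differentiable on (0,1) and satisfies the self-concordance inequality |φ'''(t)| ≤ (2/ε) ‖b − a‖_{ℓ1} φ''(t) for all 0 < t < 1. -/

import Mathlib

open MeasureTheory Complex Filter Topology

set_option maxHeartbeats 1000000

noncomputable section

/-- Frequencies: `Λ = ℤ^d \ {0}`. -/
abbrev Lam (d : ℕ) := {v : Fin d → ℤ // v ≠ 0}

/-- Negation on `Λ`. -/
def negL {d : ℕ} (l : Lam d) : Lam d := ⟨-l.1, by simpa using l.2⟩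

/-- Fourier character `φ_λ(x) = exp(2πi⟨λ,x⟩)`. -/
def phiF {d : ℕ} (l : Lam d) (x : Fin d → ℝ) : ℂ :=
  Complex.exp (2 * (Real.pi : ℂ) * Complex.I * (∑ i, (l.1 i : ℂ) * (x i : ℂ)))

/-- The real Banach space `ℓ̄₁(Λ)` of complex summable sequences with
`θ_{-λ} = conj (θ_λ)`, as a real submodule of `ℓ¹(Λ; ℂ)`. -/
def SymmL1 (d : ℕ) : Submodule ℝ (lp (fun _ : Lam d => ℂ) 1) where
  carrier := {θ | ∀ l, θ (negL l) = starRingEnd ℂ (θ l)}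
  add_mem' := by
    intro a b ha hb l
    simp only [lp.coeFn_add, Pi.add_apply, map_add, ha l, hb l]
  zero_mem' := by
    intro l
    simp [lp.coeFn_zero]
  smul_mem' := by
    intro r a ha l
    simp only [lp.coeFn_smul, Pi.smul_apply, ha l, Complex.real_smul, map_mul,
      Complex.conj_ofReal]

instance (d : ℕ) : NormedAddCommGroup (SymmL1 d) := inferInstance

instance (d : ℕ) : NormedSpace ℝ (SymmL1 d) := inferInstance

/-- The `λ`-th coefficient of an element of `ℓ̄₁(Λ)`. -/
def coeffL {d : ℕ} (θ : SymmL1 d) (l : Lam d) : ℂ := (θ : lp (fun _ : Lam d => ℂ) 1) l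

/-- The unit cube `𝒳 = [0,1]^d`. -/
def cube (d : ℕ) : Set (Fin d → ℝ) := Set.Icc 0 1

/-- The uniform probability measure on the unit cube. -/
def muU (d : ℕ) : Measure (Fin d → ℝ) := volume.restrict (cube d)

/-- `u_θ(x) = Σ_λ θ_λ φ_λ(x)` (a real number thanks to the symmetry of `θ`). -/
def uFun {d : ℕ} (θ : SymmL1 d) (x : Fin d → ℝ) : ℝ :=
  (∑' l : Lam d, coeffL θ l * phiF l x).re

/-- `h_ε(θ, y)`. -/
def hEps {d : ℕ} (ε : ℝ) (c : (Fin d → ℝ) → (Fin d → ℝ) → ℝ)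
    (θ : SymmL1 d) (y : Fin d → ℝ) : ℝ :=
  ε * Real.log (∫ x, Real.exp ((uFun θ x - c x y) / ε) ∂muU d) + ε

/-- `H_ε(θ) = ∫ h_ε(θ, y) dν(y)`. -/
def HEps {d : ℕ} (ε : ℝ) (c : (Fin d → ℝ) → (Fin d → ℝ) → ℝ)
    (ν : Measure (Fin d → ℝ)) (θ : SymmL1 d) : ℝ :=
  ∫ y, hEps ε c θ y ∂ν

/-- The probability density `F_{θ,y}`. -/
def Fdens {d : ℕ} (ε : ℝ) (c : (Fin d → ℝ) → (Fin d → ℝ) → ℝ)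
    (θ : SymmL1 d) (y : Fin d → ℝ) (x : Fin d → ℝ) : ℝ :=
  Real.exp ((uFun θ x - c x y) / ε) /
    ∫ x', Real.exp ((uFun θ x' - c x' y) / ε) ∂muU d

/-- `g_λ(θ,y) = ∫ conj(φ_λ) F_{θ,y} dμ`, the `λ`-th partial derivative of `h_ε(·,y)`. -/
def gradC {d : ℕ} (ε : ℝ) (c : (Fin d → ℝ) → (Fin d → ℝ) → ℝ)
    (θ : SymmL1 d) (y : Fin d → ℝ) (l : Lam d) : ℂ :=
  ∫ x, starRingEnd ℂ (phiF l x) * (Fdens ε c θ y x : ℂ) ∂muU d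

/-! ### Auxiliary lemmas -/

lemma hasSum_norm_coeffL {d : ℕ} (θ : SymmL1 d) :
    HasSum (fun l => ‖coeffL θ l‖) ‖θ‖ := by
  have h := lp.hasSum_norm (p := 1) (by simp) (θ : lp (fun _ : Lam d => ℂ) 1)
  simpa [coeffL] using h

lemma summable_norm_coeffL {d : ℕ} (θ : SymmL1 d) :
    Summable (fun l => ‖coeffL θ l‖) := ⟨_, hasSum_norm_coeffL θ⟩

lemma tsum_norm_coeffL {d : ℕ} (θ : SymmL1 d) :
    ∑' l, ‖coeffL θ l‖ = ‖θ‖ := (hasSum_norm_coeffL θ).tsum_eq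

lemma norm_phiF {d : ℕ} (l : Lam d) (x : Fin d → ℝ) : ‖phiF l x‖ = 1 := by
  have h : (2 * (Real.pi : ℂ) * Complex.I * (∑ i, (l.1 i : ℂ) * (x i : ℂ)))
      = ((2 * Real.pi * ∑ i, (l.1 i : ℝ) * x i : ℝ) : ℂ) * Complex.I := by
    push_cast; ring
  rw [phiF, h, Complex.norm_exp_ofReal_mul_I]

lemma abs_phiF {d : ℕ} (l : Lam d) (x : Fin d → ℝ) : ‖phiF l x‖ = 1 :=
  norm_phiF l x

lemma summable_term {d : ℕ} (θ : SymmL1 d) (x : Fin d → ℝ) :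
    Summable (fun l => coeffL θ l * phiF l x) := by
  apply Summable.of_norm
  simpa [abs_phiF] using summable_norm_coeffL θ

lemma abs_uFun_le {d : ℕ} (θ : SymmL1 d) (x : Fin d → ℝ) : |uFun θ x| ≤ ‖θ‖ := by
  have h1 : |uFun θ x| ≤ ‖∑' l, coeffL θ l * phiF l x‖ := Complex.abs_re_le_norm _
  have h2 : ‖∑' l, coeffL θ l * phiF l x‖ ≤ ∑' l, ‖coeffL θ l * phiF l x‖ :=
    norm_tsum_le_tsum_norm (by simpa [abs_phiF] using summable_norm_coeffL θ)
  have h3 : ∑' l, ‖coeffL θ l * phiF l x‖ = ‖θ‖ := by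
    simp only [norm_mul, norm_phiF, mul_one]
    exact tsum_norm_coeffL θ
  exact h1.trans (h2.trans h3.le)

lemma coeffL_add {d : ℕ} (a b : SymmL1 d) (l : Lam d) :
    coeffL (a + b) l = coeffL a l + coeffL b l := by
  simp [coeffL, lp.coeFn_add, Pi.add_apply]

lemma coeffL_smul {d : ℕ} (s : ℝ) (a : SymmL1 d) (l : Lam d) :
    coeffL (s • a) l = (s : ℂ) * coeffL a l := by
  simp [coeffL, lp.coeFn_smul, Pi.smul_apply, Complex.real_smul]

lemma uFun_line {d : ℕ} (a b : SymmL1 d) (s : ℝ) (x : Fin d → ℝ) :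
    uFun (a + s • (b - a)) x = uFun a x + s * uFun (b - a) x := by
  unfold uFun
  have h1 : ∀ l, coeffL (a + s • (b - a)) l * phiF l x
      = coeffL a l * phiF l x + s • (coeffL (b - a) l * phiF l x) := by
    intro l
    simp only [coeffL_add, coeffL_smul, Complex.real_smul]
    ring
  rw [tsum_congr h1, Summable.tsum_add (summable_term a x) ((summable_term (b - a) x).const_smul s),
    Summable.tsum_const_smul s (summable_term (b - a) x)]
  simp [Complex.add_re, Complex.smul_re]

lemma continuous_uFun {d : ℕ} (θ : SymmL1 d) : Continuous (uFun θ) := by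
  apply Complex.continuous_re.comp
  apply continuous_tsum (u := fun l => ‖coeffL θ l‖)
  · intro l
    apply continuous_const.mul
    unfold phiF
    exact Complex.continuous_exp.comp (continuous_const.mul
      (continuous_finset_sum _ fun i _ => continuous_const.mul
        (Complex.continuous_ofReal.comp (continuous_apply i))))
  · exact summable_norm_coeffL θ
  · intro l x; simp [abs_phiF]

lemma measurableSet_cube (d : ℕ) : MeasurableSet (cube d) := measurableSet_Icc

lemma muU_univ (d : ℕ) : muU d Set.univ = 1 := by
  rw [muU, Measure.restrict_apply_univ, cube,
    Real.volume_Icc_pi]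
  simp

instance muU_prob (d : ℕ) : IsProbabilityMeasure (muU d) := ⟨muU_univ d⟩

/-- self-concordance of `h_ε(·,y)` along segments.
For every `y ∈ 𝒴` and `a, b ∈ ℓ̄₁(Λ)`, the function `φ(t) = h_ε(a + t(b − a), y)` is
three times differentiable on `(0,1)` and `|φ'''(t)| ≤ (2/ε) ‖b − a‖_{ℓ1} φ''(t)`. -/
theorem statement8
    (d : ℕ) (hd : 0 < d) (ε : ℝ) (hε : 0 < ε)
    (Y : Set (Fin d → ℝ)) (ν : Measure (Fin d → ℝ)) [IsProbabilityMeasure ν]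
    (hνY : ν Yᶜ = 0)
    (c : (Fin d → ℝ) → (Fin d → ℝ) → ℝ)
    (hc_lsc : LowerSemicontinuousOn (fun p : (Fin d → ℝ) × (Fin d → ℝ) => c p.1 p.2)
      (cube d ×ˢ Y))
    (hc_int : Integrable (fun p : (Fin d → ℝ) × (Fin d → ℝ) => c p.1 p.2) ((muU d).prod ν)) :
    ∀ y ∈ Y, ∀ a b : SymmL1 d,
      ∃ p1 p2 p3 : ℝ → ℝ,
        (∀ t ∈ Set.Ioo (0 : ℝ) 1,
          HasDerivAt (fun s : ℝ => hEps ε c (a + s • (b - a)) y) (p1 t) t ∧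
          HasDerivAt p1 (p2 t) t ∧ HasDerivAt p2 (p3 t) t) ∧
        (∀ t ∈ Set.Ioo (0 : ℝ) 1, |p3 t| ≤ (2 / ε) * ‖b - a‖ * p2 t) := by
  intro y hy a b
  classical
  set f : (Fin d → ℝ) → ℝ := fun x => c x y with hf
  -- the slice is lower semicontinuous on the cube
  have hfl : LowerSemicontinuousOn f (cube d) := by
    intro x hx z hz
    have h := hc_lsc (x, y) ⟨hx, hy⟩ z hz
    have hmap : Filter.Tendsto (fun x' : Fin d → ℝ => (x', y)) (𝓝[cube d] x)
        (𝓝[cube d ×ˢ Y] (x, y)) :=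
      ((continuous_id.prodMk continuous_const).continuousWithinAt).tendsto_nhdsWithin
        (fun x' hx' => ⟨hx', hy⟩)
    exact hmap.eventually h
  -- lower bound on the slice
  obtain ⟨m, hm⟩ : ∃ m : ℝ, ∀ x ∈ cube d, m ≤ f x := by
    have hcpt : IsCompact (cube d) := isCompact_Icc
    have key : ∀ x ∈ cube d, {z | z ∈ cube d → f x - 1 < f z} ∈ 𝓝 x := by
      intro x hx
      have h := hfl x hx (f x - 1) (by linarith)
      rwa [eventually_nhdsWithin_iff] at h
    obtain ⟨t, ht⟩ := hcpt.elim_nhds_subcover'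
      (fun x _ => {z | z ∈ cube d → f x - 1 < f z}) key
    have h0 : (0 : Fin d → ℝ) ∈ cube d := Set.mem_Icc.mpr ⟨le_rfl, zero_le_one⟩
    have htne : t.Nonempty := by
      rcases Set.mem_iUnion₂.1 (ht h0) with ⟨x, hxt, _⟩
      exact ⟨x, hxt⟩
    refine ⟨t.inf' htne (fun x => f x.1 - 1), fun z hz => ?_⟩
    rcases Set.mem_iUnion₂.1 (ht hz) with ⟨x, hxt, hxz⟩
    exact (Finset.inf'_le _ hxt).trans (hxz hz).le
  -- a.e.-measurability of the slice
  have hfae : AEMeasurable f (muU d) := by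
    have hrl : LowerSemicontinuous ((cube d).restrict f) := by
      rintro ⟨x, hx⟩ z hz
      have h := hfl x hx z hz
      rw [nhdsWithin_eq_map_subtype_coe hx, Filter.eventually_map] at h
      exact h
    obtain ⟨g, hgm, hgf⟩ := (MeasurableEmbedding.subtype_coe
      (measurableSet_cube d)).exists_measurable_extend hrl.measurable (fun _ => ⟨0⟩)
    have hmem : ∀ᵐ x ∂muU d, x ∈ cube d := ae_restrict_mem (measurableSet_cube d)
    refine hgm.aemeasurable.congr ?_
    filter_upwards [hmem] with x hx
    exact (congrFun hgf ⟨x, hx⟩ : _)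
  set M : ℝ := ‖b - a‖ with hM
  set B : (Fin d → ℝ) → ℝ := uFun (b - a) with hB
  have hBc : Continuous B := continuous_uFun _
  have hBle : ∀ x, |B x| ≤ M := fun x => abs_uFun_le _ x
  set A : (Fin d → ℝ) → ℝ := fun x => uFun a x - f x with hA
  have hAmeas : AEMeasurable A (muU d) :=
    ((continuous_uFun a).measurable.aemeasurable).sub hfae
  have hAle : ∀ᵐ x ∂muU d, A x ≤ ‖a‖ - m := by
    filter_upwards [ae_restrict_mem (measurableSet_cube d)] with x hx
    have h1 := (abs_le.1 (abs_uFun_le a x)).2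
    have h2 := hm x hx
    simp only [hA]
    linarith
  have hM0 : (0 : ℝ) ≤ M := norm_nonneg _
  have hε' : ε ≠ 0 := ne_of_gt hε
  set I : ℕ → ℝ → ℝ :=
    fun k s => ∫ x, (B x) ^ k * Real.exp ((A x + s * B x) / ε) ∂(muU d) with hI
  have hexp_meas : ∀ s : ℝ,
      AEMeasurable (fun x => Real.exp ((A x + s * B x) / ε)) (muU d) := fun s =>
    Real.measurable_exp.comp_aemeasurable
      ((hAmeas.add ((hBc.measurable.aemeasurable).const_mul s)).div_const ε)
  have hIntegrable : ∀ (G : (Fin d → ℝ) → ℝ) (CG : ℝ), Measurable G →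
      (∀ x, |G x| ≤ CG) → ∀ s : ℝ,
      Integrable (fun x => G x * Real.exp ((A x + s * B x) / ε)) (muU d) := by
    intro G CG hGm hGle s
    have hCG : 0 ≤ CG := le_trans (abs_nonneg _) (hGle 0)
    refine Integrable.mono'
      (integrable_const (CG * Real.exp ((‖a‖ - m + |s| * M) / ε))) ?_ ?_
    · exact (hGm.aemeasurable.mul (hexp_meas s)).aestronglyMeasurable
    · filter_upwards [hAle] with x hx
      have h2 : s * B x ≤ |s| * M := by
        calc s * B x ≤ |s * B x| := le_abs_self _
          _ = |s| * |B x| := abs_mul _ _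
          _ ≤ |s| * M := mul_le_mul_of_nonneg_left (hBle x) (abs_nonneg s)
      have h3 : Real.exp ((A x + s * B x) / ε)
          ≤ Real.exp ((‖a‖ - m + |s| * M) / ε) := by
        apply Real.exp_le_exp.2
        have : A x + s * B x ≤ ‖a‖ - m + |s| * M := by linarith
        gcongr
      calc ‖G x * Real.exp ((A x + s * B x) / ε)‖
          = |G x| * Real.exp ((A x + s * B x) / ε) := by
            rw [Real.norm_eq_abs, abs_mul, abs_of_pos (Real.exp_pos _)]
        _ ≤ CG * Real.exp ((‖a‖ - m + |s| * M) / ε) :=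
            mul_le_mul (hGle x) h3 (Real.exp_pos _).le hCG
  have hIk_int : ∀ (k : ℕ) (s : ℝ),
      Integrable (fun x => (B x) ^ k * Real.exp ((A x + s * B x) / ε)) (muU d) := by
    intro k s
    refine hIntegrable _ (M ^ k) (hBc.measurable.pow_const k) (fun x => ?_) s
    rw [_root_.abs_pow]
    exact pow_le_pow_left₀ (abs_nonneg _) (hBle x) k
  have hI0pos : ∀ s : ℝ, 0 < I 0 s := by
    intro s
    have hint' : Integrable (fun x => Real.exp ((A x + s * B x) / ε)) (muU d) := by
      simpa using hIk_int 0 s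
    have hrw : I 0 s = ∫ x, Real.exp ((A x + s * B x) / ε) ∂(muU d) := by
      simp [hI]
    rw [hrw]
    refine (integral_pos_iff_support_of_nonneg (fun x => (Real.exp_pos _).le) hint').2 ?_
    have hsupp : Function.support (fun x : Fin d → ℝ =>
        Real.exp ((A x + s * B x) / ε)) = Set.univ := by
      ext x; simp [Function.support, Real.exp_ne_zero]
    rw [hsupp]
    simp
  -- derivative of I k
  have hD : ∀ (k : ℕ), ∀ t ∈ Set.Ioo (0 : ℝ) 1,
      HasDerivAt (I k) (ε⁻¹ * I (k + 1) t) t := by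
    intro k t ht
    have key := hasDerivAt_integral_of_dominated_loc_of_deriv_le
      (μ := muU d) (x₀ := t)
      (F := fun s x => (B x) ^ k * Real.exp ((A x + s * B x) / ε))
      (F' := fun s x => ((B x) ^ (k + 1) / ε) * Real.exp ((A x + s * B x) / ε))
      (bound := fun _ => (M ^ (k + 1) / ε) * Real.exp ((‖a‖ - m + 2 * M) / ε))
      (Metric.ball_mem_nhds t (by norm_num : (0:ℝ) < 1))
      (Filter.Eventually.of_forall fun s => (hIk_int k s).aestronglyMeasurable)
      (hIk_int k t)
      (((((hBc.measurable.pow_const (k + 1)).div_const ε).aemeasurable).mul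
        (hexp_meas t)).aestronglyMeasurable)
      ?_ (integrable_const _) ?_
    · have h2 := key.2
      have hval : ∫ x, ((B x) ^ (k + 1) / ε) * Real.exp ((A x + t * B x) / ε) ∂(muU d)
          = ε⁻¹ * I (k + 1) t := by
        have hfe : (fun x => ((B x) ^ (k + 1) / ε) * Real.exp ((A x + t * B x) / ε))
            = fun x => ε⁻¹ * ((B x) ^ (k + 1) * Real.exp ((A x + t * B x) / ε)) := by
          funext x; field_simp
        rw [hfe, integral_const_mul]
      rw [hval] at h2
      exact h2
    · filter_upwards [hAle] with x hx
      intro s hs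
      have hst : |s - t| < 1 := by
        simpa [Real.dist_eq] using Metric.mem_ball.mp hs
      have hs2 : |s| ≤ 2 := by
        have h1 : |s| ≤ |s - t| + |t| := by
          calc |s| = |s - t + t| := by ring_nf
            _ ≤ |s - t| + |t| := abs_add_le _ _
        have h2 : |t| ≤ 1 := by
          rw [abs_of_pos ht.1]; exact ht.2.le
        linarith
      have h3 : A x + s * B x ≤ ‖a‖ - m + 2 * M := by
        have h4 : s * B x ≤ |s| * M := by
          calc s * B x ≤ |s * B x| := le_abs_self _
            _ = |s| * |B x| := abs_mul _ _
            _ ≤ |s| * M := mul_le_mul_of_nonneg_left (hBle x) (abs_nonneg s)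
        have h5 : |s| * M ≤ 2 * M := mul_le_mul_of_nonneg_right hs2 hM0
        linarith
      have h6 : Real.exp ((A x + s * B x) / ε)
          ≤ Real.exp ((‖a‖ - m + 2 * M) / ε) := by
        exact Real.exp_le_exp.2 ((div_le_div_iff_of_pos_right hε).2 h3)
      calc ‖((B x) ^ (k + 1) / ε) * Real.exp ((A x + s * B x) / ε)‖
          = (|B x| ^ (k + 1) / ε) * Real.exp ((A x + s * B x) / ε) := by
            rw [Real.norm_eq_abs, abs_mul, abs_of_pos (Real.exp_pos _), abs_div,
              _root_.abs_pow, abs_of_pos hε]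
        _ ≤ (M ^ (k + 1) / ε) * Real.exp ((‖a‖ - m + 2 * M) / ε) := by
            apply mul_le_mul ?_ h6 (Real.exp_pos _).le ?_
            · exact div_le_div_of_nonneg_right
                (pow_le_pow_left₀ (abs_nonneg _) (hBle x) _) hε.le
            · positivity
    · refine Filter.Eventually.of_forall fun x => fun s _ => ?_
      have h1 : HasDerivAt (fun s : ℝ => (A x + s * B x) / ε) (B x / ε) s :=
        ((hasDerivAt_mul_const (B x)).const_add (A x)).div_const ε
      have h2 := (h1.exp).const_mul ((B x) ^ k)
      refine h2.congr_deriv ?_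
      field_simp
      ring
  -- the three derivative functions
  refine ⟨fun t => I 1 t / I 0 t,
    fun t => (I 2 t * I 0 t - (I 1 t) ^ 2) / (ε * (I 0 t) ^ 2),
    fun t => (I 3 t * (I 0 t) ^ 2 - 3 * I 1 t * I 2 t * I 0 t + 2 * (I 1 t) ^ 3)
      / (ε ^ 2 * (I 0 t) ^ 3), ?_, ?_⟩
  · intro t ht
    have h0 := hI0pos t
    refine ⟨?_, ?_, ?_⟩
    · -- first derivative
      have heq : (fun s : ℝ => hEps ε c (a + s • (b - a)) y)
          = fun s => ε * Real.log (I 0 s) + ε := by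
        funext s
        have hfe : (fun x => Real.exp ((uFun (a + s • (b - a)) x - c x y) / ε))
            = fun x => (B x) ^ 0 * Real.exp ((A x + s * B x) / ε) := by
          funext x
          rw [pow_zero, one_mul, uFun_line]
          congr 1
          simp only [hA, hB, hf]
          ring
        rw [hEps, hfe]
      rw [heq]
      have h := (((hD 0 t ht).log (hI0pos t).ne').const_mul ε).add_const ε
      refine h.congr_deriv ?_
      field_simp
    · have h := (hD 1 t ht).div (hD 0 t ht) (hI0pos t).ne'
      refine h.congr_deriv ?_
      field_simp
    · have hN : HasDerivAt (fun t => I 2 t * I 0 t - (I 1 t) ^ 2)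
          ((ε⁻¹ * I 3 t) * I 0 t + I 2 t * (ε⁻¹ * I 1 t)
            - 2 * I 1 t ^ 1 * (ε⁻¹ * I 2 t)) t :=
        ((hD 2 t ht).mul (hD 0 t ht)).sub ((hD 1 t ht).pow 2)
      have hDen : HasDerivAt (fun t => ε * (I 0 t) ^ 2)
          (ε * (2 * I 0 t ^ 1 * (ε⁻¹ * I 1 t))) t :=
        ((hD 0 t ht).pow 2).const_mul ε
      have h := hN.div hDen (by positivity)
      refine h.congr_deriv ?_
      field_simp
      ring
  · -- the self-concordance estimate
    intro t ht
    have h0 := hI0pos t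
    set e : ℝ := I 1 t / I 0 t with he
    have hIe : |I 1 t| ≤ M * I 0 t := by
      have h1 : |I 1 t| ≤ ∫ x, ‖(B x) ^ 1 * Real.exp ((A x + t * B x) / ε)‖ ∂(muU d) := by
        simp only [hI, ← Real.norm_eq_abs]
        exact norm_integral_le_integral_norm _
      have h2 : ∫ x, ‖(B x) ^ 1 * Real.exp ((A x + t * B x) / ε)‖ ∂(muU d)
          ≤ ∫ x, M * ((B x) ^ 0 * Real.exp ((A x + t * B x) / ε)) ∂(muU d) := by
        refine integral_mono (hIk_int 1 t).norm ((hIk_int 0 t).const_mul M) fun x => ?_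
        rw [Real.norm_eq_abs, pow_one, pow_zero, one_mul, abs_mul,
          abs_of_pos (Real.exp_pos _)]
        exact mul_le_mul_of_nonneg_right (hBle x) (Real.exp_pos _).le
      have h3 : ∫ x, M * ((B x) ^ 0 * Real.exp ((A x + t * B x) / ε)) ∂(muU d)
          = M * I 0 t := integral_const_mul _ _
      linarith
    have heM : |e| ≤ M := by
      rw [he, abs_div, abs_of_pos h0, div_le_iff₀ h0]
      exact hIe
    have hBe : ∀ x, |B x - e| ≤ 2 * M := by
      intro x
      calc |B x - e| ≤ |B x| + |e| := abs_sub _ _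
        _ ≤ M + M := add_le_add (hBle x) heM
        _ = 2 * M := by ring
    have hint2 : Integrable
        (fun x => (B x - e) ^ 2 * Real.exp ((A x + t * B x) / ε)) (muU d) := by
      refine hIntegrable _ ((2 * M) ^ 2)
        ((hBc.sub continuous_const).measurable.pow_const 2) (fun x => ?_) t
      rw [_root_.abs_pow]
      exact pow_le_pow_left₀ (abs_nonneg _) (hBe x) 2
    have hint3 : Integrable
        (fun x => (B x - e) ^ 3 * Real.exp ((A x + t * B x) / ε)) (muU d) := by
      refine hIntegrable _ ((2 * M) ^ 3)
        ((hBc.sub continuous_const).measurable.pow_const 3) (fun x => ?_) t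
      rw [_root_.abs_pow]
      exact pow_le_pow_left₀ (abs_nonneg _) (hBe x) 3
    set K : ℝ := ∫ x, (B x - e) ^ 2 * Real.exp ((A x + t * B x) / ε) ∂(muU d) with hKdef
    set J : ℝ := ∫ x, (B x - e) ^ 3 * Real.exp ((A x + t * B x) / ε) ∂(muU d) with hJdef
    have hK : K = I 2 t - 2 * e * I 1 t + e ^ 2 * I 0 t := by
      have hfe : (fun x => (B x - e) ^ 2 * Real.exp ((A x + t * B x) / ε))
          = fun x => ((B x) ^ 2 * Real.exp ((A x + t * B x) / ε)
            - (2 * e) * ((B x) ^ 1 * Real.exp ((A x + t * B x) / ε)))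
            + e ^ 2 * ((B x) ^ 0 * Real.exp ((A x + t * B x) / ε)) := by
        funext x; ring
      have g1 : Integrable (fun x => (B x) ^ 2 * Real.exp ((A x + t * B x) / ε)
          - (2 * e) * ((B x) ^ 1 * Real.exp ((A x + t * B x) / ε))) (muU d) :=
        (hIk_int 2 t).sub ((hIk_int 1 t).const_mul _)
      have g2 : Integrable
          (fun x => e ^ 2 * ((B x) ^ 0 * Real.exp ((A x + t * B x) / ε))) (muU d) :=
        (hIk_int 0 t).const_mul _
      rw [hKdef, hfe, integral_add g1 g2, integral_sub (hIk_int 2 t)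
        ((hIk_int 1 t).const_mul _), integral_const_mul, integral_const_mul]
    have hJ : J = I 3 t - 3 * e * I 2 t + 3 * e ^ 2 * I 1 t - e ^ 3 * I 0 t := by
      have hfe : (fun x => (B x - e) ^ 3 * Real.exp ((A x + t * B x) / ε))
          = fun x => (((B x) ^ 3 * Real.exp ((A x + t * B x) / ε)
            - (3 * e) * ((B x) ^ 2 * Real.exp ((A x + t * B x) / ε)))
            + (3 * e ^ 2) * ((B x) ^ 1 * Real.exp ((A x + t * B x) / ε)))
            - e ^ 3 * ((B x) ^ 0 * Real.exp ((A x + t * B x) / ε)) := by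
        funext x; ring
      have g1 : Integrable (fun x => (B x) ^ 3 * Real.exp ((A x + t * B x) / ε)
          - (3 * e) * ((B x) ^ 2 * Real.exp ((A x + t * B x) / ε))) (muU d) :=
        (hIk_int 3 t).sub ((hIk_int 2 t).const_mul _)
      have g2 : Integrable (fun x => (B x) ^ 3 * Real.exp ((A x + t * B x) / ε)
          - (3 * e) * ((B x) ^ 2 * Real.exp ((A x + t * B x) / ε))
          + (3 * e ^ 2) * ((B x) ^ 1 * Real.exp ((A x + t * B x) / ε))) (muU d) :=
        g1.add ((hIk_int 1 t).const_mul _)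
      have g3 : Integrable
          (fun x => e ^ 3 * ((B x) ^ 0 * Real.exp ((A x + t * B x) / ε))) (muU d) :=
        (hIk_int 0 t).const_mul _
      rw [hJdef, hfe, integral_sub g2 g3, integral_add g1 ((hIk_int 1 t).const_mul _),
        integral_sub (hIk_int 3 t) ((hIk_int 2 t).const_mul _),
        integral_const_mul, integral_const_mul, integral_const_mul]
    have hKnn : 0 ≤ K := by
      rw [hKdef]
      apply integral_nonneg
      intro x
      positivity
    have habs : |J| ≤ 2 * M * K := by
      have h1 : |J| ≤ ∫ x, ‖(B x - e) ^ 3 * Real.exp ((A x + t * B x) / ε)‖ ∂(muU d) := by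
        rw [hJdef, ← Real.norm_eq_abs]
        exact norm_integral_le_integral_norm _
      have h2 : ∫ x, ‖(B x - e) ^ 3 * Real.exp ((A x + t * B x) / ε)‖ ∂(muU d)
          ≤ ∫ x, (2 * M) * ((B x - e) ^ 2 * Real.exp ((A x + t * B x) / ε)) ∂(muU d) := by
        refine integral_mono hint3.norm (hint2.const_mul _) fun x => ?_
        rw [Real.norm_eq_abs, abs_mul, abs_of_pos (Real.exp_pos _), _root_.abs_pow]
        have h3 : |B x - e| ^ 3 ≤ (2 * M) * (B x - e) ^ 2 := by
          have h4 : |B x - e| ^ 3 = |B x - e| * (B x - e) ^ 2 := by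
            rw [pow_succ' (|B x - e|) 2, _root_.sq_abs]
          rw [h4]
          exact mul_le_mul_of_nonneg_right (hBe x) (sq_nonneg _)
        calc |B x - e| ^ 3 * Real.exp ((A x + t * B x) / ε)
            ≤ ((2 * M) * (B x - e) ^ 2) * Real.exp ((A x + t * B x) / ε) :=
              mul_le_mul_of_nonneg_right h3 (Real.exp_pos _).le
          _ = (2 * M) * ((B x - e) ^ 2 * Real.exp ((A x + t * B x) / ε)) := by ring
      have h5 : ∫ x, (2 * M) * ((B x - e) ^ 2 * Real.exp ((A x + t * B x) / ε)) ∂(muU d)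
          = 2 * M * K := integral_const_mul _ _
      linarith
    have hKval : K = (I 2 t * I 0 t - (I 1 t) ^ 2) / I 0 t := by
      rw [hK, he]
      field_simp
      ring
    have hJval : J = (I 3 t * (I 0 t) ^ 2 - 3 * I 1 t * I 2 t * I 0 t
        + 2 * (I 1 t) ^ 3) / (I 0 t) ^ 2 := by
      rw [hJ, he]
      field_simp
      ring
    have hp3 : (I 3 t * (I 0 t) ^ 2 - 3 * I 1 t * I 2 t * I 0 t + 2 * (I 1 t) ^ 3)
        / (ε ^ 2 * (I 0 t) ^ 3) = J / (ε ^ 2 * I 0 t) := by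
      rw [hJval, div_div]
      rw [div_eq_div_iff (by positivity) (by positivity)]
      ring
    have hp2 : (I 2 t * I 0 t - (I 1 t) ^ 2) / (ε * (I 0 t) ^ 2)
        = K / (ε * I 0 t) := by
      rw [hKval, div_div]
      rw [div_eq_div_iff (by positivity) (by positivity)]
      ring
    show |(I 3 t * (I 0 t) ^ 2 - 3 * I 1 t * I 2 t * I 0 t + 2 * (I 1 t) ^ 3)
        / (ε ^ 2 * (I 0 t) ^ 3)|
      ≤ 2 / ε * M * ((I 2 t * I 0 t - (I 1 t) ^ 2) / (ε * (I 0 t) ^ 2))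
    rw [hp3, hp2, abs_div, abs_of_pos (by positivity : (0:ℝ) < ε ^ 2 * I 0 t)]
    rw [div_le_iff₀ (by positivity : (0:ℝ) < ε ^ 2 * I 0 t)]
    have hfinal : 2 / ε * M * (K / (ε * I 0 t)) * (ε ^ 2 * I 0 t) = 2 * M * K := by
      field_simp
    rw [hfinal]
    exact habs

end
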